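/- (Integrality gap of the restricted dominating set problem in circle graphs.) Let m be a positive integer and represent chords of a circle with m marked points 0,1,…,m−1 as pairs (l,r) of indices with l < r. Say that a chord β = (l',r') dominates a chord α = (l,r) if l' ≤ l ≤ r' ≤ r or l ≤ l' ≤ r ≤ r'. Let D be a finite set of demand chords, C a finite set of covering chords, g : C → ℝ≥0 a cost function, and z : C → ℝ≥0 a fractional assignment satisfying, for every α ∈ D, the covering constraint ∑_{β ∈ C, β dominates α} z(β) ≥ 1. Then there exists a subset S ⊆ C such that every demand chord α ∈ D is dominated by some chord β ∈ S, and ∑_{β ∈ S} g(β) ≤ 8 · ∑_{β ∈ C} g(β)·z(β). -/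

import Mathlib

/-- Chord `β = (l', r')` dominates chord `α = (l, r)` iff
`l' ≤ l ≤ r' ≤ r` or `l ≤ l' ≤ r ≤ r'` (the two chords interleave). -/
def Dominates (β α : ℕ × ℕ) : Prop :=
  (β.1 ≤ α.1 ∧ α.1 ≤ β.2 ∧ β.2 ≤ α.2) ∨ (α.1 ≤ β.1 ∧ β.1 ≤ α.2 ∧ α.2 ≤ β.2)

instance (β α : ℕ × ℕ) : Decidable (Dominates β α) := by
  unfold Dominates; infer_instance

/-- Type-1 domination: `q` crosses the left endpoint of `a`. -/
def Cov1 (q a : ℕ × ℕ) : Prop := q.1 ≤ a.1 ∧ a.1 ≤ q.2 ∧ q.2 ≤ a.2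

/-- Type-2 domination: `q` crosses the right endpoint of `a`. -/
def Cov2 (q a : ℕ × ℕ) : Prop := a.1 ≤ q.1 ∧ q.1 ≤ a.2 ∧ a.2 ≤ q.2

instance : DecidableRel Cov1 := fun q a =>
  decidable_of_iff (q.1 ≤ a.1 ∧ a.1 ≤ q.2 ∧ q.2 ≤ a.2) Iff.rfl

instance : DecidableRel Cov2 := fun q a =>
  decidable_of_iff (a.1 ≤ q.1 ∧ q.1 ≤ a.2 ∧ a.2 ≤ q.2) Iff.rfl

/-- Any finite cover can be pruned to a cover in which every member has a
"private" demand that it alone covers. -/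
lemma prune (cov : ℕ × ℕ → ℕ × ℕ → Prop) :
    ∀ (S A : Finset (ℕ × ℕ)), (∀ α ∈ A, ∃ p ∈ S, cov p α) →
      ∃ T ⊆ S, (∀ α ∈ A, ∃ p ∈ T, cov p α) ∧
        ∀ q ∈ T, ∃ β ∈ A, cov q β ∧ ∀ q' ∈ T, cov q' β → q' = q := by
  classical
  intro S
  induction S using Finset.strongInduction with
  | _ S ih =>
    intro A hA
    by_cases h : ∃ q ∈ S, ∀ α ∈ A, ∃ p ∈ S.erase q, cov p α
    · obtain ⟨q, hq, hcov⟩ := h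
      obtain ⟨T, hT1, hT2, hT3⟩ := ih (S.erase q) (Finset.erase_ssubset hq) A hcov
      exact ⟨T, hT1.trans (Finset.erase_subset _ _), hT2, hT3⟩
    · push_neg at h
      refine ⟨S, le_refl _, hA, ?_⟩
      intro q hq
      obtain ⟨α, hαA, hα⟩ := h q hq
      obtain ⟨p, hpS, hpcov⟩ := hA α hαA
      have hpq : p = q := by
        by_contra hne
        exact hα p (Finset.mem_erase.mpr ⟨hne, hpS⟩) hpcov
      refine ⟨α, hαA, hpq ▸ hpcov, ?_⟩
      intro q' hq' hcovq'
      by_contra hne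
      exact hα q' (Finset.mem_erase.mpr ⟨hne, hq'⟩) hcovq'

/-- One-sided primal-dual lemma: if every demand in `A` has fractional mass at
least `1/2` on its one-sided dominators in `C`, then there is an integral
one-sided cover of cost at most `4` times the fractional cost. -/
lemma oneSide (cov : ℕ × ℕ → ℕ × ℕ → Prop) [DecidableRel cov] (k : ℕ × ℕ → ℤ)
    (C : Finset (ℕ × ℕ)) (z : ℕ × ℕ → ℝ) (hz : ∀ p ∈ C, 0 ≤ z p)
    (H : ∀ (α : ℕ × ℕ) (T : Finset (ℕ × ℕ)), (∀ q ∈ T, cov q α) → T.Nonempty →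
      ∃ qL ∈ T, ∃ qR ∈ T, ∀ β, k α ≤ k β → ∀ q ∈ T, cov q β → cov qL β ∨ cov qR β) :
    ∀ (n : ℕ) (A : Finset (ℕ × ℕ)) (g : ℕ × ℕ → ℝ), A.card ≤ n →
      (∀ p ∈ C, 0 ≤ g p) →
      (∀ α ∈ A, 1 / 2 ≤ ∑ p ∈ C.filter (fun p => cov p α), z p) →
      ∃ S ⊆ C, (∀ α ∈ A, ∃ p ∈ S, cov p α) ∧
        (∀ q ∈ S, ∃ β ∈ A, cov q β ∧ ∀ q' ∈ S, cov q' β → q' = q) ∧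
        ∑ p ∈ S, g p ≤ 4 * ∑ p ∈ C, g p * z p := by
  classical
  intro n
  induction n with
  | zero =>
    intro A g hcard hg hmass
    have hA : A = ∅ := Finset.card_eq_zero.mp (Nat.le_zero.mp hcard)
    subst hA
    have h0 : 0 ≤ ∑ p ∈ C, g p * z p :=
      Finset.sum_nonneg fun p hp => mul_nonneg (hg p hp) (hz p hp)
    exact ⟨∅, Finset.empty_subset _, by simp, by simp, by simpa using by linarith⟩
  | succ n ihn =>
    intro A g hcard hg hmass
    rcases A.eq_empty_or_nonempty with rfl | hne
    · have h0 : 0 ≤ ∑ p ∈ C, g p * z p :=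
        Finset.sum_nonneg fun p hp => mul_nonneg (hg p hp) (hz p hp)
      exact ⟨∅, Finset.empty_subset _, by simp, by simp, by simpa using by linarith⟩
    · obtain ⟨α1, hα1A, hα1min⟩ := A.exists_min_image k hne
      have hPne : (C.filter (fun p => cov p α1)).Nonempty := by
        by_contra hPe
        rw [Finset.not_nonempty_iff_eq_empty] at hPe
        have hm := hmass α1 hα1A
        rw [hPe] at hm
        simp at hm
        linarith
      obtain ⟨qs, hqsP, hqsmin⟩ := (C.filter (fun p => cov p α1)).exists_min_image g hPne
      have hqsC : qs ∈ C := (Finset.mem_filter.mp hqsP).1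
      have hqscov : cov qs α1 := (Finset.mem_filter.mp hqsP).2
      set y1 := g qs with hy1def
      have hy1 : 0 ≤ y1 := hg qs hqsC
      set g' : ℕ × ℕ → ℝ := fun p => if cov p α1 then g p - y1 else g p with hg'def
      have hg' : ∀ p ∈ C, 0 ≤ g' p := by
        intro p hp
        simp only [hg'def]
        split
        · rename_i hcovp
          have := hqsmin p (Finset.mem_filter.mpr ⟨hp, hcovp⟩)
          linarith
        · exact hg p hp
      have hcard' : (A.erase α1).card ≤ n := by
        have := Finset.card_erase_of_mem hα1A
        omega
      have hmass' : ∀ α ∈ A.erase α1,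
          1 / 2 ≤ ∑ p ∈ C.filter (fun p => cov p α), z p :=
        fun α hα => hmass α (Finset.mem_of_mem_erase hα)
      obtain ⟨S', hS'C, hcov', hmin', hcost'⟩ := ihn (A.erase α1) g' hcard' hg' hmass'
      have hsum : ∑ p ∈ C, g' p * z p
          = ∑ p ∈ C, g p * z p - y1 * ∑ p ∈ C.filter (fun p => cov p α1), z p := by
        have hpt : ∀ p ∈ C, g' p * z p
            = g p * z p - (if cov p α1 then y1 * z p else 0) := by
          intro p hp
          simp only [hg'def]
          split <;> ring
        rw [Finset.sum_congr rfl hpt, Finset.sum_sub_distrib]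
        congr 1
        rw [Finset.mul_sum, ← Finset.sum_filter]
      have hmassP : 1 / 2 ≤ ∑ p ∈ C.filter (fun p => cov p α1), z p := hmass α1 hα1A
      have hkey : 4 * ∑ p ∈ C, g' p * z p ≤ 4 * ∑ p ∈ C, g p * z p - 2 * y1 := by
        rw [hsum]
        nlinarith [hy1, hmassP]
      by_cases hcase : ∃ p ∈ S', cov p α1
      · -- α1 is already covered by S'
        have hTcard : (S'.filter (fun q => cov q α1)).card ≤ 2 := by
          by_contra hgt
          push_neg at hgt
          set T := S'.filter (fun q => cov q α1) with hT
          have hTcov : ∀ q ∈ T, cov q α1 := fun q hq => (Finset.mem_filter.mp hq).2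
          have hTne : T.Nonempty := Finset.card_pos.mp (by omega)
          obtain ⟨qL, hqL, qR, hqR, hLR⟩ := H α1 T hTcov hTne
          have hsd : (T \ {qL, qR}).Nonempty := by
            rw [← Finset.card_pos]
            have h2 : ({qL, qR} : Finset (ℕ × ℕ)).card ≤ 2 := by
              apply (Finset.card_insert_le _ _).trans
              simp
            have h3 := Finset.le_card_sdiff ({qL, qR} : Finset (ℕ × ℕ)) T
            omega
          obtain ⟨q, hqsd⟩ := hsd
          rw [Finset.mem_sdiff] at hqsd
          obtain ⟨hqT, hqnot⟩ := hqsd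
          simp only [Finset.mem_insert, Finset.mem_singleton] at hqnot
          push_neg at hqnot
          have hqS' : q ∈ S' := (Finset.mem_filter.mp hqT).1
          obtain ⟨β, hβ, hqβ, huniq⟩ := hmin' q hqS'
          have hkβ : k α1 ≤ k β := hα1min β (Finset.mem_of_mem_erase hβ)
          rcases hLR β hkβ q hqT hqβ with hL | hR
          · exact hqnot.1 (huniq qL (Finset.mem_filter.mp hqL).1 hL).symm
          · exact hqnot.2 (huniq qR (Finset.mem_filter.mp hqR).1 hR).symm
        have hsumS' : ∑ p ∈ S', g p
            = ∑ p ∈ S', g' p + y1 * (S'.filter (fun q => cov q α1)).card := by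
          have hpt : ∀ p ∈ S', g p = g' p + (if cov p α1 then y1 else 0) := by
            intro p hp
            simp only [hg'def]
            split <;> ring
          rw [Finset.sum_congr rfl hpt, Finset.sum_add_distrib]
          congr 1
          rw [← Finset.sum_filter, Finset.sum_const, nsmul_eq_mul, mul_comm]
        refine ⟨S', hS'C, ?_, ?_, ?_⟩
        · intro α hα
          rcases eq_or_ne α α1 with rfl | hne'
          · exact hcase
          · exact hcov' α (Finset.mem_erase.mpr ⟨hne', hα⟩)
        · intro q hq
          obtain ⟨β, hβ, h1, h2⟩ := hmin' q hq
          exact ⟨β, Finset.mem_of_mem_erase hβ, h1, h2⟩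
        · rw [hsumS']
          have hTc : ((S'.filter (fun q => cov q α1)).card : ℝ) ≤ 2 := by
            exact_mod_cast hTcard
          have hmul : y1 * ((S'.filter (fun q => cov q α1)).card : ℝ) ≤ y1 * 2 :=
            mul_le_mul_of_nonneg_left hTc hy1
          linarith [hcost', hkey]
      · -- α1 is not covered by S': add the cheapest dominator and prune
        push_neg at hcase
        have hqs_not : qs ∉ S' := fun h => hcase qs h hqscov
        have hcovA : ∀ α ∈ A, ∃ p ∈ insert qs S', cov p α := by
          intro α hα
          rcases eq_or_ne α α1 with rfl | hne'
          · exact ⟨qs, Finset.mem_insert_self _ _, hqscov⟩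
          · obtain ⟨p, hp, hpc⟩ := hcov' α (Finset.mem_erase.mpr ⟨hne', hα⟩)
            exact ⟨p, Finset.mem_insert_of_mem hp, hpc⟩
        obtain ⟨S, hSsub, hScov, hSmin⟩ := prune cov (insert qs S') A hcovA
        have hinsC : insert qs S' ⊆ C := Finset.insert_subset hqsC hS'C
        refine ⟨S, hSsub.trans hinsC, hScov, hSmin, ?_⟩
        have hS'g : ∑ p ∈ S', g p = ∑ p ∈ S', g' p := by
          apply Finset.sum_congr rfl
          intro p hp
          simp only [hg'def]
          rw [if_neg (hcase p hp)]
        have h1 : ∑ p ∈ S, g p ≤ ∑ p ∈ insert qs S', g p :=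
          Finset.sum_le_sum_of_subset_of_nonneg hSsub
            (fun p hp _ => hg p (hinsC hp))
        rw [Finset.sum_insert hqs_not] at h1
        rw [hS'g] at h1
        linarith [hcost', hkey]

/-- Extremal selection property for type-1 domination. -/
lemma H1sel : ∀ (α : ℕ × ℕ) (T : Finset (ℕ × ℕ)), (∀ q ∈ T, Cov1 q α) → T.Nonempty →
    ∃ qL ∈ T, ∃ qR ∈ T, ∀ β, ((α.2 : ℤ)) ≤ ((β.2 : ℤ)) → ∀ q ∈ T,
      Cov1 q β → Cov1 qL β ∨ Cov1 qR β := by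
  intro α T hT hne
  obtain ⟨qL, hqL, hqLmin⟩ := T.exists_min_image (fun q => q.1) hne
  obtain ⟨qR, hqR, hqRmax⟩ := T.exists_max_image (fun q => q.2) hne
  refine ⟨qL, hqL, qR, hqR, ?_⟩
  intro β hk q hq hqβ
  have hk' : α.2 ≤ β.2 := by exact_mod_cast hk
  obtain ⟨h1, h2, h3⟩ := hqβ
  obtain ⟨l1, l2, l3⟩ := hT qL hqL
  obtain ⟨r1, r2, r3⟩ := hT qR hqR
  rcases le_total β.1 α.1 with hb | hb
  · exact Or.inl ⟨le_trans (hqLmin q hq) h1, le_trans hb l2, le_trans l3 hk'⟩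
  · exact Or.inr ⟨le_trans r1 hb, le_trans h2 (hqRmax q hq), le_trans r3 hk'⟩

/-- Extremal selection property for type-2 domination. -/
lemma H2sel : ∀ (α : ℕ × ℕ) (T : Finset (ℕ × ℕ)), (∀ q ∈ T, Cov2 q α) → T.Nonempty →
    ∃ qL ∈ T, ∃ qR ∈ T, ∀ β, (-(α.1 : ℤ)) ≤ (-(β.1 : ℤ)) → ∀ q ∈ T,
      Cov2 q β → Cov2 qL β ∨ Cov2 qR β := by
  intro α T hT hne
  obtain ⟨qA, hqA, hqAmin⟩ := T.exists_min_image (fun q => q.1) hne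
  obtain ⟨qB, hqB, hqBmax⟩ := T.exists_max_image (fun q => q.2) hne
  refine ⟨qA, hqA, qB, hqB, ?_⟩
  intro β hk q hq hqβ
  have hk' : β.1 ≤ α.1 := by
    have h : (β.1 : ℤ) ≤ (α.1 : ℤ) := by linarith
    exact_mod_cast h
  obtain ⟨h1, h2, h3⟩ := hqβ
  obtain ⟨a1, a2, a3⟩ := hT qA hqA
  obtain ⟨b1, b2, b3⟩ := hT qB hqB
  rcases le_total β.2 α.2 with hb | hb
  · exact Or.inl ⟨le_trans hk' a1, le_trans (hqAmin q hq) h2, le_trans hb a3⟩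
  · exact Or.inr ⟨le_trans hk' b1, le_trans b2 hb, le_trans h3 (hqBmax q hq)⟩

/-- Integrality gap at most 8 for the restricted dominating set
problem in circle graphs: any feasible fractional solution `z` of the standard
LP can be converted into an integral dominating set `S ⊆ C` of cost at most
`8` times the fractional cost. -/
theorem stmt_2 (m : ℕ) (hm : 0 < m) (D C : Finset (ℕ × ℕ))
    (hD : ∀ α ∈ D, α.1 < α.2 ∧ α.2 ≤ m - 1)
    (hC : ∀ β ∈ C, β.1 < β.2 ∧ β.2 ≤ m - 1)
    (g z : ℕ × ℕ → ℝ) (hg : ∀ β ∈ C, 0 ≤ g β) (hz : ∀ β ∈ C, 0 ≤ z β)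
    (hfeas : ∀ α ∈ D, 1 ≤ ∑ β ∈ C.filter (fun β => Dominates β α), z β) :
    ∃ S ⊆ C, (∀ α ∈ D, ∃ β ∈ S, Dominates β α) ∧
      ∑ β ∈ S, g β ≤ 8 * ∑ β ∈ C, g β * z β := by
  classical
  -- split demands into left-heavy and right-heavy ones
  set D1 : Finset (ℕ × ℕ) :=
    D.filter (fun α => 1 / 2 ≤ ∑ p ∈ C.filter (fun p => Cov1 p α), z p) with hD1
  set D2 : Finset (ℕ × ℕ) :=
    D.filter (fun α => ¬ (1 / 2 ≤ ∑ p ∈ C.filter (fun p => Cov1 p α), z p)) with hD2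
  have hmass1 : ∀ α ∈ D1, 1 / 2 ≤ ∑ p ∈ C.filter (fun p => Cov1 p α), z p :=
    fun α hα => (Finset.mem_filter.mp hα).2
  have hmass2 : ∀ α ∈ D2, 1 / 2 ≤ ∑ p ∈ C.filter (fun p => Cov2 p α), z p := by
    intro α hα
    obtain ⟨hαD, hαs⟩ := Finset.mem_filter.mp hα
    have hfil : C.filter (fun β => Dominates β α)
        = C.filter (fun β => Cov1 β α) ∪ C.filter (fun β => Cov2 β α) := by
      ext x
      simp only [Finset.mem_filter, Finset.mem_union]
      simp only [Dominates, Cov1, Cov2]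
      tauto
    have hfeasα := hfeas α hαD
    rw [hfil] at hfeasα
    have hui := Finset.sum_union_inter (s₁ := C.filter (fun β => Cov1 β α))
      (s₂ := C.filter (fun β => Cov2 β α)) (f := z)
    have hinter : 0 ≤ ∑ p ∈ (C.filter (fun β => Cov1 β α)) ∩ (C.filter (fun β => Cov2 β α)), z p := by
      apply Finset.sum_nonneg
      intro p hp
      exact hz p (Finset.mem_filter.mp (Finset.mem_of_mem_inter_left hp)).1
    have hs1 : ¬ (1 / 2 ≤ ∑ p ∈ C.filter (fun p => Cov1 p α), z p) := hαs
    push_neg at hs1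
    linarith
  obtain ⟨S1, hS1C, hS1cov, _, hS1cost⟩ :=
    oneSide Cov1 (fun a => (a.2 : ℤ)) C z hz H1sel D1.card D1 g le_rfl hg hmass1
  obtain ⟨S2, hS2C, hS2cov, _, hS2cost⟩ :=
    oneSide Cov2 (fun a => (-(a.1 : ℤ))) C z hz H2sel D2.card D2 g le_rfl hg hmass2
  refine ⟨S1 ∪ S2, Finset.union_subset hS1C hS2C, ?_, ?_⟩
  · intro α hα
    by_cases hs : 1 / 2 ≤ ∑ p ∈ C.filter (fun p => Cov1 p α), z p
    · obtain ⟨p, hp, hpc⟩ := hS1cov α (Finset.mem_filter.mpr ⟨hα, hs⟩)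
      exact ⟨p, Finset.mem_union_left _ hp, Or.inl hpc⟩
    · obtain ⟨p, hp, hpc⟩ := hS2cov α (Finset.mem_filter.mpr ⟨hα, hs⟩)
      exact ⟨p, Finset.mem_union_right _ hp, Or.inr hpc⟩
  · have hui := Finset.sum_union_inter (s₁ := S1) (s₂ := S2) (f := g)
    have hinter : 0 ≤ ∑ p ∈ S1 ∩ S2, g p := by
      apply Finset.sum_nonneg
      intro p hp
      exact hg p (hS1C (Finset.mem_of_mem_inter_left hp))
    linarith
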